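/- Let k >= 2 and n = 3k - 1. Then the Kneser graph K(n,k) is vertex diameter-2-critical: for the vertex u = {1,...,k}, the vertices v = {k+1,...,2k} and w = {2k,...,3k-1} are non-adjacent, and the only vertex adjacent to both v and w is u, so dist_{K(n,k)-u}(v,w) >= 3. -/

import Mathlib

/-- The Kneser graph `K(n,k)`: vertices are the `k`-element subsets of an `n`-element set,
adjacent iff disjoint. -/
def kneserGraph (n k : ℕ) : SimpleGraph {s : Finset (Fin n) // s.card = k} where
  Adj a b := a ≠ b ∧ Disjoint (a : Finset (Fin n)) (b : Finset (Fin n))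
  symm := ⟨fun _ _ h => ⟨h.1.symm, h.2.symm⟩⟩
  loopless := ⟨fun _ h => h.1 rfl⟩

lemma card_filter_fin (n : ℕ) (p : ℕ → Prop) [DecidablePred p] :
    (Finset.univ.filter (fun i : Fin n => p (i : ℕ))).card
      = ((Finset.range n).filter p).card := by
  refine Finset.card_bij (fun i _ => (i : ℕ)) ?_ ?_ ?_
  · intro a ha
    simp only [Finset.mem_filter, Finset.mem_univ, true_and] at ha
    simp [a.isLt, ha]
  · intro a _ b _ h
    exact Fin.val_injective h
  · intro b hb
    simp only [Finset.mem_filter, Finset.mem_range] at hb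
    exact ⟨⟨b, hb.1⟩, by simp [hb.2], rfl⟩

lemma walk_cases_of_length_le_two {V : Type*} {G : SimpleGraph V} {a b : V}
    (p : G.Walk a b) (h : p.length ≤ 2) :
    a = b ∨ G.Adj a b ∨ ∃ z, G.Adj a z ∧ G.Adj z b := by
  cases p with
  | nil => exact Or.inl rfl
  | cons hadj q =>
    cases q with
    | nil => exact Or.inr (Or.inl hadj)
    | cons hadj' q' =>
      cases q' with
      | nil => exact Or.inr (Or.inr ⟨_, hadj, hadj'⟩)
      | cons _ _ => simp [SimpleGraph.Walk.length_cons] at h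

/-- For `k ≥ 2` and `n = 3k - 1`, the Kneser graph `K(n,k)` is vertex diameter-2-critical
at `u = {1,…,k}`: the vertices `v = {k+1,…,2k}` and `w = {2k,…,3k-1}` are non-adjacent,
their only common neighbor is `u`, and hence `dist_{K(n,k)-u}(v,w) ≥ 3`. -/
theorem kneser_critical_of_eq (k : ℕ) (hk : 2 ≤ k) :
    ∃ u v w : {s : Finset (Fin (3 * k - 1)) // s.card = k},
      (u : Finset (Fin (3 * k - 1))) = Finset.univ.filter (fun i : Fin (3 * k - 1) => (i : ℕ) < k) ∧
      (v : Finset (Fin (3 * k - 1))) =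
        Finset.univ.filter (fun i : Fin (3 * k - 1) => k ≤ (i : ℕ) ∧ (i : ℕ) < 2 * k) ∧
      (w : Finset (Fin (3 * k - 1))) = Finset.univ.filter (fun i : Fin (3 * k - 1) => 2 * k - 1 ≤ (i : ℕ)) ∧
      v ≠ u ∧ w ≠ u ∧
      ¬ (kneserGraph (3 * k - 1) k).Adj v w ∧
      (∀ z, (kneserGraph (3 * k - 1) k).Adj z v → (kneserGraph (3 * k - 1) k).Adj z w →
        z = u) ∧
      ∀ (hv : v ∈ ({y | y ≠ u} : Set {s : Finset (Fin (3 * k - 1)) // s.card = k}))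
        (hw : w ∈ ({y | y ≠ u} : Set {s : Finset (Fin (3 * k - 1)) // s.card = k})),
        3 ≤ ((kneserGraph (3 * k - 1) k).induce {y | y ≠ u}).edist ⟨v, hv⟩ ⟨w, hw⟩ := by
  set n := 3 * k - 1 with hn
  have hkn : k < n := by omega
  have h2kn : 2 * k - 1 < n := by omega
  -- cardinalities
  have hcu : (Finset.univ.filter (fun i : Fin n => (i : ℕ) < k)).card = k := by
    rw [card_filter_fin n (fun m => m < k)]
    have : (Finset.range n).filter (fun m => m < k) = Finset.range k := by
      ext m; simp only [Finset.mem_filter, Finset.mem_range]; omega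
    rw [this, Finset.card_range]
  have hcv : (Finset.univ.filter
      (fun i : Fin n => k ≤ (i : ℕ) ∧ (i : ℕ) < 2 * k)).card = k := by
    rw [card_filter_fin n (fun m => k ≤ m ∧ m < 2 * k)]
    have : (Finset.range n).filter (fun m => k ≤ m ∧ m < 2 * k) = Finset.Ico k (2 * k) := by
      ext m; simp only [Finset.mem_filter, Finset.mem_range, Finset.mem_Ico]; omega
    rw [this, Nat.card_Ico]; omega
  have hcw : (Finset.univ.filter (fun i : Fin n => 2 * k - 1 ≤ (i : ℕ))).card = k := by
    rw [card_filter_fin n (fun m => 2 * k - 1 ≤ m)]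
    have : (Finset.range n).filter (fun m => 2 * k - 1 ≤ m) = Finset.Ico (2 * k - 1) n := by
      ext m; simp only [Finset.mem_filter, Finset.mem_range, Finset.mem_Ico]; omega
    rw [this, Nat.card_Ico]; omega
  -- distinctness of the underlying finsets
  have hvu : Finset.univ.filter (fun i : Fin n => k ≤ (i : ℕ) ∧ (i : ℕ) < 2 * k)
      ≠ Finset.univ.filter (fun i : Fin n => (i : ℕ) < k) := by
    intro h
    rw [Finset.ext_iff] at h
    have := h ⟨k, hkn⟩
    simp only [Finset.mem_filter, Finset.mem_univ, true_and] at this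
    omega
  have hwu : Finset.univ.filter (fun i : Fin n => 2 * k - 1 ≤ (i : ℕ))
      ≠ Finset.univ.filter (fun i : Fin n => (i : ℕ) < k) := by
    intro h
    rw [Finset.ext_iff] at h
    have := h ⟨2 * k - 1, h2kn⟩
    simp only [Finset.mem_filter, Finset.mem_univ, true_and] at this
    omega
  have hvw : Finset.univ.filter (fun i : Fin n => k ≤ (i : ℕ) ∧ (i : ℕ) < 2 * k)
      ≠ Finset.univ.filter (fun i : Fin n => 2 * k - 1 ≤ (i : ℕ)) := by
    intro h
    rw [Finset.ext_iff] at h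
    have := h ⟨k, hkn⟩
    simp only [Finset.mem_filter, Finset.mem_univ, true_and] at this
    omega
  -- v and w are not disjoint
  have hnd : ¬ Disjoint (Finset.univ.filter (fun i : Fin n => k ≤ (i : ℕ) ∧ (i : ℕ) < 2 * k))
      (Finset.univ.filter (fun i : Fin n => 2 * k - 1 ≤ (i : ℕ))) := by
    intro hd
    have hmem : (⟨2 * k - 1, h2kn⟩ : Fin n) ∈
        Finset.univ.filter (fun i : Fin n => k ≤ (i : ℕ) ∧ (i : ℕ) < 2 * k) := by
      simp only [Finset.mem_filter, Finset.mem_univ, true_and]; omega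
    have hmem' : (⟨2 * k - 1, h2kn⟩ : Fin n) ∈
        Finset.univ.filter (fun i : Fin n => 2 * k - 1 ≤ (i : ℕ)) := by
      simp only [Finset.mem_filter, Finset.mem_univ, true_and]; omega
    exact (Finset.disjoint_left.mp hd hmem) hmem'
  -- common neighbor is u
  have hcommon : ∀ z : Finset (Fin n), z.card = k →
      Disjoint z (Finset.univ.filter (fun i : Fin n => k ≤ (i : ℕ) ∧ (i : ℕ) < 2 * k)) →
      Disjoint z (Finset.univ.filter (fun i : Fin n => 2 * k - 1 ≤ (i : ℕ))) →
      z = Finset.univ.filter (fun i : Fin n => (i : ℕ) < k) := by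
    intro z hz hdv hdw
    have hsub : z ⊆ Finset.univ.filter (fun i : Fin n => (i : ℕ) < k) := by
      intro i hi
      simp only [Finset.mem_filter, Finset.mem_univ, true_and]
      by_contra hik
      push_neg at hik
      by_cases h2 : (i : ℕ) < 2 * k
      · exact Finset.disjoint_left.mp hdv hi
          (by simp only [Finset.mem_filter, Finset.mem_univ, true_and]; omega)
      · exact Finset.disjoint_left.mp hdw hi
          (by simp only [Finset.mem_filter, Finset.mem_univ, true_and]; omega)
    exact Finset.eq_of_subset_of_card_le hsub (by rw [hcu, hz])
  refine ⟨⟨_, hcu⟩, ⟨_, hcv⟩, ⟨_, hcw⟩, rfl, rfl, rfl, ?_, ?_, ?_, ?_, ?_⟩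
  · exact fun h => hvu (congrArg Subtype.val h)
  · exact fun h => hwu (congrArg Subtype.val h)
  · rintro ⟨-, hd⟩
    exact hnd hd
  · rintro ⟨z, hz⟩ ⟨-, hdv⟩ ⟨-, hdw⟩
    exact Subtype.ext (hcommon z hz hdv hdw)
  · -- distance at least 3
    intro hv hw
    by_contra hlt
    push_neg at hlt
    have hne : ((kneserGraph n k).induce {y | y ≠ ⟨_, hcu⟩}).edist
        ⟨⟨_, hcv⟩, hv⟩ ⟨⟨_, hcw⟩, hw⟩ ≠ ⊤ :=
      fun h => by rw [h] at hlt; exact (not_le.mpr hlt) le_top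
    obtain ⟨p, hp⟩ := SimpleGraph.exists_walk_of_edist_ne_top hne
    have hlen : p.length ≤ 2 := by
      have h3 : (p.length : ℕ∞) < 3 := hp ▸ hlt
      have : p.length < 3 := by exact_mod_cast h3
      omega
    rcases walk_cases_of_length_le_two p hlen with heq | hadj | ⟨z, hz1, hz2⟩
    · exact hvw (congrArg (fun x => (Subtype.val (Subtype.val x))) heq)
    · exact hnd hadj.2
    · have hz1' : (kneserGraph n k).Adj (z : {s : Finset (Fin n) // s.card = k}) ⟨_, hcv⟩ :=
        hz1.symm
      have hz2' : (kneserGraph n k).Adj (z : {s : Finset (Fin n) // s.card = k}) ⟨_, hcw⟩ :=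
        hz2
      have : (z : {s : Finset (Fin n) // s.card = k}) = ⟨_, hcu⟩ :=
        Subtype.ext (hcommon _ (z : {s : Finset (Fin n) // s.card = k}).2 hz1'.2 hz2'.2)
    -- z ∈ {y | y ≠ u}
      exact z.2 this
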